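/- Let u : ℝⁿ \ B → ℂ be a C² solution of (Δ + λ)u = 0 outside a ball B, λ > 0, satisfying the Sommerfeld radiation condition lim_{|x|→∞} |x|^{(n−1)/2}( (x/|x|)·∇u(x) − i√λ u(x) ) = 0 uniformly in direction. If additionally lim_{R→∞} ∫_{|x|=R} (∂_ν u ū − u ∂_ν ū) dS = 0, then lim_{R→∞} ∫_{|x|=R} |u|² dS = 0. -/

import Mathlib

open MeasureTheory Filter

/-- The Laplacian of a complex-valued function on `ℝⁿ`. -/
noncomputable def lapC {n : ℕ} (u : EuclideanSpace ℝ (Fin n) → ℂ)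
    (x : EuclideanSpace ℝ (Fin n)) : ℂ :=
  ∑ i : Fin n,
    fderiv ℝ (fun y => fderiv ℝ u y (EuclideanSpace.single i 1)) x
      (EuclideanSpace.single i 1)

lemma key_ident (a b : ℂ) (s : ℝ) :
    s ^ 2 * ‖b‖ ^ 2 =
      ‖a - Complex.I * (s : ℂ) * b‖ ^ 2 - ‖a‖ ^ 2 -
        (Complex.I * (s : ℂ) * (a * (starRingEnd ℂ) b - b * (starRingEnd ℂ) a)).re := by
  simp only [Complex.sq_norm, Complex.normSq_apply, Complex.sub_re,
    Complex.sub_im, Complex.mul_re, Complex.mul_im, Complex.I_re, Complex.I_im,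
    Complex.ofReal_re, Complex.ofReal_im, Complex.conj_re, Complex.conj_im]
  ring

lemma aux_cont {n : ℕ} (u : EuclideanSpace ℝ (Fin n) → ℂ) {r₀ : ℝ} (hr₀ : 0 < r₀)
    (hu : ContDiffOn ℝ 2 u (Metric.ball (0 : EuclideanSpace ℝ (Fin n)) r₀)ᶜ)
    {R : ℝ} (hR : r₀ < R) :
    Continuous (fun ω : Metric.sphere (0 : EuclideanSpace ℝ (Fin n)) 1 =>
      fderiv ℝ u (R • (ω : EuclideanSpace ℝ (Fin n))) (ω : EuclideanSpace ℝ (Fin n))) ∧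
    Continuous (fun ω : Metric.sphere (0 : EuclideanSpace ℝ (Fin n)) 1 =>
      u (R • (ω : EuclideanSpace ℝ (Fin n)))) := by
  have hmap : Continuous (fun ω : Metric.sphere (0 : EuclideanSpace ℝ (Fin n)) 1 =>
      R • (ω : EuclideanSpace ℝ (Fin n))) := continuous_subtype_val.const_smul R
  have hmem : ∀ ω : Metric.sphere (0 : EuclideanSpace ℝ (Fin n)) 1,
      R • (ω : EuclideanSpace ℝ (Fin n)) ∈
        (Metric.closedBall (0 : EuclideanSpace ℝ (Fin n)) r₀)ᶜ := by
    intro ω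
    simp only [Set.mem_compl_iff, Metric.mem_closedBall, dist_zero_right, not_le, norm_smul]
    have h1 : ‖(ω : EuclideanSpace ℝ (Fin n))‖ = 1 := by
      simpa using mem_sphere_zero_iff_norm.mp ω.2
    rw [h1]
    simpa [abs_of_pos (hr₀.trans hR)] using hR
  have hsub : (Metric.closedBall (0 : EuclideanSpace ℝ (Fin n)) r₀)ᶜ ⊆
      (Metric.ball (0 : EuclideanSpace ℝ (Fin n)) r₀)ᶜ :=
    Set.compl_subset_compl.2 Metric.ball_subset_closedBall
  have hopen : IsOpen (Metric.closedBall (0 : EuclideanSpace ℝ (Fin n)) r₀)ᶜ :=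
    Metric.isClosed_closedBall.isOpen_compl
  have hfc : ContinuousOn (fderiv ℝ u) (Metric.closedBall (0 : EuclideanSpace ℝ (Fin n)) r₀)ᶜ :=
    (hu.mono hsub).continuousOn_fderiv_of_isOpen hopen (by norm_num)
  exact ⟨(hfc.comp_continuous hmap hmem).clm_apply continuous_subtype_val,
    hu.continuousOn.comp_continuous hmap (fun ω => hsub (hmem ω))⟩

lemma aux_integrable {n : ℕ} {X : Type*} [NormedAddCommGroup X]
    {f : Metric.sphere (0 : EuclideanSpace ℝ (Fin n)) 1 → X} (hf : Continuous f) :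
    Integrable f ((volume : Measure (EuclideanSpace ℝ (Fin n))).toSphere) :=
  hf.integrable_of_hasCompactSupport
    (IsCompact.of_isClosed_subset isCompact_univ (isClosed_tsupport f) (Set.subset_univ _))

/-- Rellich-type decay: a radiating solution of `(Δ + λ)u = 0` outside a ball
whose boundary cross term tends to `0` has `∫_{|x|=R} |u|² dS → 0`.  Here the
integral over the sphere of radius `R` is expressed as `R^{n-1}` times an
integral over the unit sphere (with its natural surface measure). -/
theorem rellich_decay_of_src
    {n : ℕ} (hn : 3 ≤ n) (u : EuclideanSpace ℝ (Fin n) → ℂ)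
    (lam : ℝ) (hlam : 0 < lam) (r₀ : ℝ) (hr₀ : 0 < r₀)
    (hu : ContDiffOn ℝ 2 u (Metric.ball (0 : EuclideanSpace ℝ (Fin n)) r₀)ᶜ)
    (hpde : ∀ x ∉ Metric.ball (0 : EuclideanSpace ℝ (Fin n)) r₀,
      lapC u x + (lam : ℂ) * u x = 0)
    (hsrc : ∀ ε > (0 : ℝ), ∃ R₀ : ℝ, ∀ x : EuclideanSpace ℝ (Fin n),
      R₀ ≤ ‖x‖ →
        ‖x‖ ^ (((n : ℝ) - 1) / 2) *
          ‖fderiv ℝ u x (‖x‖⁻¹ • x) -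
            Complex.I * (Real.sqrt lam : ℂ) * u x‖ < ε)
    (hcross : Tendsto
      (fun R : ℝ => R ^ (n - 1) •
        ∫ ω : Metric.sphere (0 : EuclideanSpace ℝ (Fin n)) 1,
          (fderiv ℝ u (R • (ω : EuclideanSpace ℝ (Fin n))) (ω : EuclideanSpace ℝ (Fin n)) *
              (starRingEnd ℂ) (u (R • (ω : EuclideanSpace ℝ (Fin n)))) -
            u (R • (ω : EuclideanSpace ℝ (Fin n))) *
              (starRingEnd ℂ)
                (fderiv ℝ u (R • (ω : EuclideanSpace ℝ (Fin n)))
                  (ω : EuclideanSpace ℝ (Fin n))))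
          ∂((volume : Measure (EuclideanSpace ℝ (Fin n))).toSphere))
      atTop (nhds 0)) :
    Tendsto
      (fun R : ℝ => R ^ (n - 1) *
        ∫ ω : Metric.sphere (0 : EuclideanSpace ℝ (Fin n)) 1,
          ‖u (R • (ω : EuclideanSpace ℝ (Fin n)))‖ ^ 2
          ∂((volume : Measure (EuclideanSpace ℝ (Fin n))).toSphere))
      atTop (nhds 0) := by
  set μ := (volume : Measure (EuclideanSpace ℝ (Fin n))).toSphere with hμdef
  have hs0 : 0 < Real.sqrt lam := Real.sqrt_pos.2 hlam
  have hs2 : Real.sqrt lam ^ 2 = lam := Real.sq_sqrt hlam.le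
  set M := (μ Set.univ).toReal with hMdef
  have hM0 : 0 ≤ M := ENNReal.toReal_nonneg
  set T₀ : ℝ := max (r₀ + 1) 1 with hT₀def
  set C : ℝ → ℂ := fun R =>
    ∫ ω : Metric.sphere (0 : EuclideanSpace ℝ (Fin n)) 1,
      (fderiv ℝ u (R • (ω : EuclideanSpace ℝ (Fin n))) (ω : EuclideanSpace ℝ (Fin n)) *
          (starRingEnd ℂ) (u (R • (ω : EuclideanSpace ℝ (Fin n)))) -
        u (R • (ω : EuclideanSpace ℝ (Fin n))) *
          (starRingEnd ℂ)
            (fderiv ℝ u (R • (ω : EuclideanSpace ℝ (Fin n)))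
              (ω : EuclideanSpace ℝ (Fin n)))) ∂μ with hCdef
  set A : ℝ → ℝ := fun R => R ^ (n - 1) *
    ∫ ω : Metric.sphere (0 : EuclideanSpace ℝ (Fin n)) 1,
      ‖fderiv ℝ u (R • (ω : EuclideanSpace ℝ (Fin n))) (ω : EuclideanSpace ℝ (Fin n)) -
        Complex.I * (Real.sqrt lam : ℂ) * u (R • (ω : EuclideanSpace ℝ (Fin n)))‖ ^ 2 ∂μ
    with hAdef
  -- the main inequality for large R
  have main : ∀ R : ℝ, T₀ ≤ R →
      lam * (R ^ (n - 1) *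
        ∫ ω : Metric.sphere (0 : EuclideanSpace ℝ (Fin n)) 1,
          ‖u (R • (ω : EuclideanSpace ℝ (Fin n)))‖ ^ 2 ∂μ) ≤
      A R + Real.sqrt lam * ‖R ^ (n - 1) • C R‖ := by
    intro R hR
    have hRr : r₀ < R := lt_of_lt_of_le (by linarith) (le_trans (le_max_left _ _) hR)
    have hR0 : (0 : ℝ) < R := lt_of_lt_of_le one_pos (le_trans (le_max_right _ _) hR)
    obtain ⟨ca, cu⟩ := aux_cont u hr₀ hu hRr
    have cD : Continuous (fun ω : Metric.sphere (0 : EuclideanSpace ℝ (Fin n)) 1 =>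
        fderiv ℝ u (R • (ω : EuclideanSpace ℝ (Fin n))) (ω : EuclideanSpace ℝ (Fin n)) -
          Complex.I * (Real.sqrt lam : ℂ) * u (R • (ω : EuclideanSpace ℝ (Fin n)))) :=
      ca.sub (continuous_const.mul cu)
    have ccross : Continuous (fun ω : Metric.sphere (0 : EuclideanSpace ℝ (Fin n)) 1 =>
        (fderiv ℝ u (R • (ω : EuclideanSpace ℝ (Fin n))) (ω : EuclideanSpace ℝ (Fin n)) *
            (starRingEnd ℂ) (u (R • (ω : EuclideanSpace ℝ (Fin n)))) -
          u (R • (ω : EuclideanSpace ℝ (Fin n))) *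
            (starRingEnd ℂ)
              (fderiv ℝ u (R • (ω : EuclideanSpace ℝ (Fin n)))
                (ω : EuclideanSpace ℝ (Fin n))))) :=
      (ca.mul (Complex.continuous_conj.comp cu)).sub
        (cu.mul (Complex.continuous_conj.comp ca))
    have iv : Integrable (fun ω : Metric.sphere (0 : EuclideanSpace ℝ (Fin n)) 1 =>
        ‖u (R • (ω : EuclideanSpace ℝ (Fin n)))‖ ^ 2) μ := aux_integrable (cu.norm.pow 2)
    have ia : Integrable (fun ω : Metric.sphere (0 : EuclideanSpace ℝ (Fin n)) 1 =>
        ‖fderiv ℝ u (R • (ω : EuclideanSpace ℝ (Fin n))) (ω : EuclideanSpace ℝ (Fin n))‖ ^ 2) μ :=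
      aux_integrable (ca.norm.pow 2)
    have iD : Integrable (fun ω : Metric.sphere (0 : EuclideanSpace ℝ (Fin n)) 1 =>
        ‖fderiv ℝ u (R • (ω : EuclideanSpace ℝ (Fin n))) (ω : EuclideanSpace ℝ (Fin n)) -
          Complex.I * (Real.sqrt lam : ℂ) * u (R • (ω : EuclideanSpace ℝ (Fin n)))‖ ^ 2) μ :=
      aux_integrable (cD.norm.pow 2)
    have ic : Integrable (fun ω : Metric.sphere (0 : EuclideanSpace ℝ (Fin n)) 1 =>
        (fderiv ℝ u (R • (ω : EuclideanSpace ℝ (Fin n))) (ω : EuclideanSpace ℝ (Fin n)) *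
            (starRingEnd ℂ) (u (R • (ω : EuclideanSpace ℝ (Fin n)))) -
          u (R • (ω : EuclideanSpace ℝ (Fin n))) *
            (starRingEnd ℂ)
              (fderiv ℝ u (R • (ω : EuclideanSpace ℝ (Fin n)))
                (ω : EuclideanSpace ℝ (Fin n))))) μ := aux_integrable ccross
    have icre : Integrable (fun ω : Metric.sphere (0 : EuclideanSpace ℝ (Fin n)) 1 =>
        (Complex.I * (Real.sqrt lam : ℂ) *
          (fderiv ℝ u (R • (ω : EuclideanSpace ℝ (Fin n))) (ω : EuclideanSpace ℝ (Fin n)) *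
              (starRingEnd ℂ) (u (R • (ω : EuclideanSpace ℝ (Fin n)))) -
            u (R • (ω : EuclideanSpace ℝ (Fin n))) *
              (starRingEnd ℂ)
                (fderiv ℝ u (R • (ω : EuclideanSpace ℝ (Fin n)))
                  (ω : EuclideanSpace ℝ (Fin n))))).re) μ :=
      aux_integrable (Complex.continuous_re.comp (continuous_const.mul ccross))
    have hiden : lam *
        ∫ ω : Metric.sphere (0 : EuclideanSpace ℝ (Fin n)) 1,
          ‖u (R • (ω : EuclideanSpace ℝ (Fin n)))‖ ^ 2 ∂μ =
        (∫ ω : Metric.sphere (0 : EuclideanSpace ℝ (Fin n)) 1,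
          ‖fderiv ℝ u (R • (ω : EuclideanSpace ℝ (Fin n))) (ω : EuclideanSpace ℝ (Fin n)) -
            Complex.I * (Real.sqrt lam : ℂ) * u (R • (ω : EuclideanSpace ℝ (Fin n)))‖ ^ 2 ∂μ) -
        (∫ ω : Metric.sphere (0 : EuclideanSpace ℝ (Fin n)) 1,
          ‖fderiv ℝ u (R • (ω : EuclideanSpace ℝ (Fin n))) (ω : EuclideanSpace ℝ (Fin n))‖ ^ 2 ∂μ) -
        (Complex.I * (Real.sqrt lam : ℂ) * C R).re := by
      have key' : ∀ a b : ℂ, lam * ‖b‖ ^ 2 =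
          ‖a - Complex.I * (Real.sqrt lam : ℂ) * b‖ ^ 2 - ‖a‖ ^ 2 -
            (Complex.I * (Real.sqrt lam : ℂ) *
              (a * (starRingEnd ℂ) b - b * (starRingEnd ℂ) a)).re := by
        intro a b
        conv_lhs => rw [← hs2]
        exact key_ident a b _
      rw [← integral_const_mul]
      have hfun : (fun ω : Metric.sphere (0 : EuclideanSpace ℝ (Fin n)) 1 =>
          lam * ‖u (R • (ω : EuclideanSpace ℝ (Fin n)))‖ ^ 2) =
          fun ω : Metric.sphere (0 : EuclideanSpace ℝ (Fin n)) 1 =>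
            ‖fderiv ℝ u (R • (ω : EuclideanSpace ℝ (Fin n))) (ω : EuclideanSpace ℝ (Fin n)) -
              Complex.I * (Real.sqrt lam : ℂ) * u (R • (ω : EuclideanSpace ℝ (Fin n)))‖ ^ 2 -
            ‖fderiv ℝ u (R • (ω : EuclideanSpace ℝ (Fin n))) (ω : EuclideanSpace ℝ (Fin n))‖ ^ 2 -
            (Complex.I * (Real.sqrt lam : ℂ) *
              (fderiv ℝ u (R • (ω : EuclideanSpace ℝ (Fin n))) (ω : EuclideanSpace ℝ (Fin n)) *
                  (starRingEnd ℂ) (u (R • (ω : EuclideanSpace ℝ (Fin n)))) -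
                u (R • (ω : EuclideanSpace ℝ (Fin n))) *
                  (starRingEnd ℂ)
                    (fderiv ℝ u (R • (ω : EuclideanSpace ℝ (Fin n)))
                      (ω : EuclideanSpace ℝ (Fin n))))).re := by
        funext ω
        exact key' _ _
      have iDa : Integrable (fun ω : Metric.sphere (0 : EuclideanSpace ℝ (Fin n)) 1 =>
          ‖fderiv ℝ u (R • (ω : EuclideanSpace ℝ (Fin n))) (ω : EuclideanSpace ℝ (Fin n)) -
              Complex.I * (Real.sqrt lam : ℂ) * u (R • (ω : EuclideanSpace ℝ (Fin n)))‖ ^ 2 -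
            ‖fderiv ℝ u (R • (ω : EuclideanSpace ℝ (Fin n)))
              (ω : EuclideanSpace ℝ (Fin n))‖ ^ 2) μ := iD.sub ia
      rw [hfun, integral_sub iDa icre, integral_sub iD ia]
      congr 1
      have := integral_re (μ := μ) (𝕜 := ℂ) (ic.const_mul (Complex.I * (Real.sqrt lam : ℂ)))
      simp only [RCLike.re_to_complex] at this
      rw [this, integral_const_mul]
    have h3 : 0 ≤ ∫ ω : Metric.sphere (0 : EuclideanSpace ℝ (Fin n)) 1,
        ‖fderiv ℝ u (R • (ω : EuclideanSpace ℝ (Fin n))) (ω : EuclideanSpace ℝ (Fin n))‖ ^ 2 ∂μ :=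
      integral_nonneg fun ω => sq_nonneg _
    have h4 : -(Complex.I * (Real.sqrt lam : ℂ) * C R).re ≤ Real.sqrt lam * ‖C R‖ := by
      have h5 : |(Complex.I * (Real.sqrt lam : ℂ) * C R).re| ≤
          ‖Complex.I * (Real.sqrt lam : ℂ) * C R‖ := Complex.abs_re_le_norm _
      have h6 : ‖Complex.I * (Real.sqrt lam : ℂ) * C R‖ = Real.sqrt lam * ‖C R‖ := by
        simp [norm_mul, Complex.norm_real, Real.norm_eq_abs, abs_of_nonneg hs0.le]
      exact (neg_le_abs _).trans (h6 ▸ h5)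
    have h2 : lam * ∫ ω : Metric.sphere (0 : EuclideanSpace ℝ (Fin n)) 1,
        ‖u (R • (ω : EuclideanSpace ℝ (Fin n)))‖ ^ 2 ∂μ ≤
        (∫ ω : Metric.sphere (0 : EuclideanSpace ℝ (Fin n)) 1,
          ‖fderiv ℝ u (R • (ω : EuclideanSpace ℝ (Fin n))) (ω : EuclideanSpace ℝ (Fin n)) -
            Complex.I * (Real.sqrt lam : ℂ) * u (R • (ω : EuclideanSpace ℝ (Fin n)))‖ ^ 2 ∂μ) +
        Real.sqrt lam * ‖C R‖ := by
      rw [hiden]; linarith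
    have hRpow : (0 : ℝ) ≤ R ^ (n - 1) := pow_nonneg hR0.le _
    have hnorm : R ^ (n - 1) * (Real.sqrt lam * ‖C R‖) =
        Real.sqrt lam * ‖R ^ (n - 1) • C R‖ := by
      rw [norm_smul, Real.norm_eq_abs, abs_of_nonneg hRpow]; ring
    calc lam * (R ^ (n - 1) *
          ∫ ω : Metric.sphere (0 : EuclideanSpace ℝ (Fin n)) 1,
            ‖u (R • (ω : EuclideanSpace ℝ (Fin n)))‖ ^ 2 ∂μ) =
        R ^ (n - 1) * (lam *
          ∫ ω : Metric.sphere (0 : EuclideanSpace ℝ (Fin n)) 1,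
            ‖u (R • (ω : EuclideanSpace ℝ (Fin n)))‖ ^ 2 ∂μ) := by ring
      _ ≤ R ^ (n - 1) * ((∫ ω : Metric.sphere (0 : EuclideanSpace ℝ (Fin n)) 1,
            ‖fderiv ℝ u (R • (ω : EuclideanSpace ℝ (Fin n))) (ω : EuclideanSpace ℝ (Fin n)) -
              Complex.I * (Real.sqrt lam : ℂ) * u (R • (ω : EuclideanSpace ℝ (Fin n)))‖ ^ 2 ∂μ) +
            Real.sqrt lam * ‖C R‖) := mul_le_mul_of_nonneg_left h2 hRpow
      _ = A R + Real.sqrt lam * ‖R ^ (n - 1) • C R‖ := by rw [mul_add, hnorm]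
  -- the square-of-SRC term tends to zero
  have hA : Tendsto A atTop (nhds 0) := by
    rw [Metric.tendsto_atTop]
    intro ε hε
    have hM1 : (0 : ℝ) < M + 1 := by linarith
    set ε' := Real.sqrt (ε / (2 * (M + 1))) with hε'def
    have hε'pos : 0 < ε' := Real.sqrt_pos.2 (by positivity)
    have hε'sq : ε' ^ 2 = ε / (2 * (M + 1)) := Real.sq_sqrt (by positivity)
    obtain ⟨R₁, hR₁⟩ := hsrc ε' hε'pos
    refine ⟨max R₁ T₀, fun R hR => ?_⟩
    have hRT : T₀ ≤ R := le_trans (le_max_right _ _) hR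
    have hRR₁ : R₁ ≤ R := le_trans (le_max_left _ _) hR
    have hRr : r₀ < R := lt_of_lt_of_le (by linarith) (le_trans (le_max_left _ _) hRT)
    have hR0 : (0 : ℝ) < R := lt_of_lt_of_le one_pos (le_trans (le_max_right _ _) hRT)
    obtain ⟨ca, cu⟩ := aux_cont u hr₀ hu hRr
    have cD : Continuous (fun ω : Metric.sphere (0 : EuclideanSpace ℝ (Fin n)) 1 =>
        fderiv ℝ u (R • (ω : EuclideanSpace ℝ (Fin n))) (ω : EuclideanSpace ℝ (Fin n)) -
          Complex.I * (Real.sqrt lam : ℂ) * u (R • (ω : EuclideanSpace ℝ (Fin n)))) :=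
      ca.sub (continuous_const.mul cu)
    have iD : Integrable (fun ω : Metric.sphere (0 : EuclideanSpace ℝ (Fin n)) 1 =>
        ‖fderiv ℝ u (R • (ω : EuclideanSpace ℝ (Fin n))) (ω : EuclideanSpace ℝ (Fin n)) -
          Complex.I * (Real.sqrt lam : ℂ) * u (R • (ω : EuclideanSpace ℝ (Fin n)))‖ ^ 2) μ :=
      aux_integrable (cD.norm.pow 2)
    have hRp0 : (0 : ℝ) < R ^ (((n : ℝ) - 1) / 2) := Real.rpow_pos_of_pos hR0 _
    have hpt : ∀ ω : Metric.sphere (0 : EuclideanSpace ℝ (Fin n)) 1,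
        ‖fderiv ℝ u (R • (ω : EuclideanSpace ℝ (Fin n))) (ω : EuclideanSpace ℝ (Fin n)) -
          Complex.I * (Real.sqrt lam : ℂ) * u (R • (ω : EuclideanSpace ℝ (Fin n)))‖ ^ 2 ≤
        (ε' / R ^ (((n : ℝ) - 1) / 2)) ^ 2 := by
      intro ω
      have hω : ‖(ω : EuclideanSpace ℝ (Fin n))‖ = 1 := by
        simpa using mem_sphere_zero_iff_norm.mp ω.2
      have hnx : ‖R • (ω : EuclideanSpace ℝ (Fin n))‖ = R := by
        rw [norm_smul, hω, Real.norm_eq_abs, abs_of_pos hR0, mul_one]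
      have h := hR₁ (R • (ω : EuclideanSpace ℝ (Fin n))) (by rw [hnx]; exact hRR₁)
      rw [hnx, smul_smul, inv_mul_cancel₀ hR0.ne', one_smul] at h
      have hlt : ‖fderiv ℝ u (R • (ω : EuclideanSpace ℝ (Fin n)))
            (ω : EuclideanSpace ℝ (Fin n)) -
          Complex.I * (Real.sqrt lam : ℂ) * u (R • (ω : EuclideanSpace ℝ (Fin n)))‖ ≤
          ε' / R ^ (((n : ℝ) - 1) / 2) := by
        rw [le_div_iff₀ hRp0]
        nlinarith [h]
      exact pow_le_pow_left₀ (norm_nonneg _) hlt 2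
    have hint : (∫ ω : Metric.sphere (0 : EuclideanSpace ℝ (Fin n)) 1,
        ‖fderiv ℝ u (R • (ω : EuclideanSpace ℝ (Fin n))) (ω : EuclideanSpace ℝ (Fin n)) -
          Complex.I * (Real.sqrt lam : ℂ) * u (R • (ω : EuclideanSpace ℝ (Fin n)))‖ ^ 2 ∂μ) ≤
        M * (ε' / R ^ (((n : ℝ) - 1) / 2)) ^ 2 := by
      calc _ ≤ ∫ _ω : Metric.sphere (0 : EuclideanSpace ℝ (Fin n)) 1,
            (ε' / R ^ (((n : ℝ) - 1) / 2)) ^ 2 ∂μ :=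
          integral_mono iD (integrable_const _) hpt
        _ = M * (ε' / R ^ (((n : ℝ) - 1) / 2)) ^ 2 := by
          rw [integral_const, smul_eq_mul, hMdef]; rfl
    have hpow : (R ^ (((n : ℝ) - 1) / 2)) ^ 2 = R ^ (n - 1) := by
      rw [← Real.rpow_natCast (R ^ (((n : ℝ) - 1) / 2)) 2, ← Real.rpow_mul hR0.le]
      have h1 : ((n : ℝ) - 1) / 2 * (2 : ℕ) = ((n - 1 : ℕ) : ℝ) := by
        rw [Nat.cast_sub (by omega)]
        push_cast
        ring
      rw [h1, Real.rpow_natCast]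
    have hAval : A R ≤ M * ε' ^ 2 := by
      have : A R ≤ R ^ (n - 1) * (M * (ε' / R ^ (((n : ℝ) - 1) / 2)) ^ 2) := by
        rw [hAdef]
        exact mul_le_mul_of_nonneg_left hint (pow_nonneg hR0.le _)
      calc A R ≤ R ^ (n - 1) * (M * (ε' / R ^ (((n : ℝ) - 1) / 2)) ^ 2) := this
        _ = M * ε' ^ 2 := by
          rw [div_pow, hpow]
          field_simp
    have hA0 : 0 ≤ A R := by
      rw [hAdef]
      exact mul_nonneg (pow_nonneg hR0.le _) (integral_nonneg fun ω => sq_nonneg _)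
    rw [Real.dist_eq, sub_zero, abs_of_nonneg hA0]
    calc A R ≤ M * ε' ^ 2 := hAval
      _ < ε := by
          rw [hε'sq]
          have h2M : (0:ℝ) < 2 * (M + 1) := by linarith
          have he : M * (ε / (2 * (M + 1))) = ε * (M / (2 * (M + 1))) := by ring
          rw [he]
          have hlt1 : M / (2 * (M + 1)) < 1 := (div_lt_one h2M).2 (by linarith)
          calc ε * (M / (2 * (M + 1))) < ε * 1 := by
                exact mul_lt_mul_of_pos_left hlt1 hε
            _ = ε := mul_one ε
  -- the cross term tends to zero
  have hG : Tendsto (fun R : ℝ => Real.sqrt lam * ‖R ^ (n - 1) • C R‖) atTop (nhds 0) := by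
    have := (hcross.norm).const_mul (Real.sqrt lam)
    simpa using this
  have hupper : Tendsto (fun R : ℝ => (A R + Real.sqrt lam * ‖R ^ (n - 1) • C R‖) / lam)
      atTop (nhds 0) := by
    have := (hA.add hG).div_const lam
    simpa using this
  refine tendsto_of_tendsto_of_tendsto_of_le_of_le' tendsto_const_nhds hupper ?_ ?_
  · filter_upwards [eventually_ge_atTop T₀] with R hR
    have hR0 : (0 : ℝ) < R := lt_of_lt_of_le one_pos (le_trans (le_max_right _ _) hR)
    exact mul_nonneg (pow_nonneg hR0.le _) (integral_nonneg fun ω => sq_nonneg _)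
  · filter_upwards [eventually_ge_atTop T₀] with R hR
    rw [le_div_iff₀ hlam]
    nlinarith [main R hR]
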